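/- Let r ∈ ℝ, μ > r, σ > 0, α > 0, T > 0, θ := (μ − r)/σ, K_l ∈ ℝ, 0 ≤ t < T, and x ∈ ℝ. With d_l := (K_l − x e^{r(T−t)})·α/(θ√(T−t)), p(t,x) := Φ(d_l)(e^{−r(T−t)}K_l − x) + (θ√(T−t)/α)e^{−r(T−t)}φ(d_l), and π̃_p(t,x) := −Φ(d_l)/(σ√(T−t)(Φ(d_l)d_l + φ(d_l))), the total amount invested in the risky asset by the optimal strategy under lower constraint K_l equals (θ/(ασ))e^{−r(T−t)} + π̃_p(t,x)·p(t,x) = (θ/(ασ))e^{−r(T−t)}·(1 − Φ(d_l)). In particular it is strictly positive, strictly smaller than the optimal unconstrained amount (θ/(ασ))e^{−r(T−t)}, and equals exactly half of the unconstrained amount when x = K_l e^{−r(T−t)}. -/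

import Mathlib

open MeasureTheory ProbabilityTheory Real

/-- The standard normal cumulative distribution function. -/
noncomputable def stdNormalCDF (d : ℝ) : ℝ :=
  ((gaussianReal 0 1) (Set.Iic d)).toReal

/-- The standard normal density. -/
noncomputable def stdNormalPDF (d : ℝ) : ℝ :=
  (Real.sqrt (2 * Real.pi))⁻¹ * Real.exp (-(d ^ 2) / 2)

lemma stdNormalPDF_eq_gaussian (x : ℝ) : stdNormalPDF x = gaussianPDFReal 0 1 x := by
  simp [stdNormalPDF, gaussianPDFReal]

lemma stdNormalPDF_pos (x : ℝ) : 0 < stdNormalPDF x := by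
  rw [stdNormalPDF]; positivity

lemma integrable_stdNormalPDF : Integrable stdNormalPDF := by
  simpa [funext stdNormalPDF_eq_gaussian] using integrable_gaussianPDFReal 0 1

lemma integral_stdNormalPDF : ∫ x, stdNormalPDF x = 1 := by
  simpa [funext stdNormalPDF_eq_gaussian] using integral_gaussianPDFReal_eq_one 0 one_ne_zero

lemma stdNormalCDF_eq (d : ℝ) : stdNormalCDF d = ∫ x in Set.Iic d, stdNormalPDF x := by
  rw [stdNormalCDF, gaussianReal_apply_eq_integral 0 one_ne_zero,
    ENNReal.toReal_ofReal]
  · simp [funext stdNormalPDF_eq_gaussian]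
  · exact setIntegral_nonneg measurableSet_Iic fun x _ => (gaussianPDFReal_pos 0 1 x one_ne_zero).le

lemma stdNormalCDF_pos (d : ℝ) : 0 < stdNormalCDF d := by
  rw [stdNormalCDF_eq]
  rw [setIntegral_pos_iff_support_of_nonneg_ae]
  · have : Function.support stdNormalPDF = Set.univ := by
      ext x; simp [Function.mem_support, (stdNormalPDF_pos x).ne']
    rw [this, Set.univ_inter]
    simp [Real.volume_Iic]
  · exact Filter.Eventually.of_forall fun x => (stdNormalPDF_pos x).le
  · exact integrable_stdNormalPDF.integrableOn

lemma stdNormalCDF_lt_one (d : ℝ) : stdNormalCDF d < 1 := by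
  have h1 : (1 : ℝ) - stdNormalCDF d = ∫ x in Set.Ioi d, stdNormalPDF x := by
    rw [stdNormalCDF_eq, ← integral_stdNormalPDF, sub_eq_iff_eq_add']
    exact (intervalIntegral.integral_Iic_add_Ioi integrable_stdNormalPDF.integrableOn
      integrable_stdNormalPDF.integrableOn).symm
  have h2 : 0 < ∫ x in Set.Ioi d, stdNormalPDF x := by
    rw [setIntegral_pos_iff_support_of_nonneg_ae]
    · have : Function.support stdNormalPDF = Set.univ := by
        ext x; simp [Function.mem_support, (stdNormalPDF_pos x).ne']
      rw [this, Set.univ_inter]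
      simp [Real.volume_Ioi]
    · exact Filter.Eventually.of_forall fun x => (stdNormalPDF_pos x).le
    · exact integrable_stdNormalPDF.integrableOn
  linarith [h1 ▸ h2]

lemma stdNormalCDF_zero : stdNormalCDF 0 = 1 / 2 := by
  have heven : ∀ x : ℝ, stdNormalPDF (-x) = stdNormalPDF x := by
    intro x; simp [stdNormalPDF]
  have h1 : ∫ x in Set.Iic (0:ℝ), stdNormalPDF x = ∫ x in Set.Ici (0:ℝ), stdNormalPDF x := by
    have := integral_comp_neg_Iic (0:ℝ) stdNormalPDF
    simp only [heven, neg_zero] at this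
    rw [this, integral_Ici_eq_integral_Ioi]
  have h2 : ∫ x in Set.Ici (0:ℝ), stdNormalPDF x = ∫ x in Set.Ioi (0:ℝ), stdNormalPDF x :=
    integral_Ici_eq_integral_Ioi
  have h3 := intervalIntegral.integral_Iic_add_Ioi (b := (0:ℝ))
    integrable_stdNormalPDF.integrableOn integrable_stdNormalPDF.integrableOn
  rw [integral_stdNormalPDF] at h3
  rw [stdNormalCDF_eq]
  linarith

lemma integral_x_mul_exp (d : ℝ) :
    ∫ x in Set.Iic d, x * Real.exp (-(x ^ 2) / 2) = -Real.exp (-(d ^ 2) / 2) := by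
  have hderiv : ∀ x ∈ Set.Iic d, HasDerivAt (fun y : ℝ => -Real.exp (-(y ^ 2) / 2))
      (x * Real.exp (-(x ^ 2) / 2)) x := by
    intro x _
    have h1 : HasDerivAt (fun y : ℝ => -(y ^ 2) / 2) (-x) x := by
      have := ((hasDerivAt_pow 2 x).neg).div_const 2
      refine this.congr_deriv ?_; push_cast; ring
    have := (h1.exp).neg
    refine this.congr_deriv ?_; ring
  have hint : IntegrableOn (fun x : ℝ => x * Real.exp (-(x ^ 2) / 2)) (Set.Iic d) := by
    have h := integrable_mul_exp_neg_mul_sq (b := (2⁻¹ : ℝ)) (by norm_num)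
    have heq : (fun x : ℝ => x * Real.exp (-(x ^ 2) / 2))
        = fun x : ℝ => x * Real.exp (-2⁻¹ * x ^ 2) := by
      funext x; congr 1; congr 1; ring
    rw [heq]
    exact h.integrableOn
  have htend : Filter.Tendsto (fun y : ℝ => -Real.exp (-(y ^ 2) / 2)) Filter.atBot (nhds 0) := by
    rw [← neg_zero]
    refine Filter.Tendsto.neg ?_
    refine Real.tendsto_exp_atBot.comp ?_
    have h : Filter.Tendsto (fun y : ℝ => y ^ 2) Filter.atBot Filter.atTop := by
      have := (Filter.tendsto_pow_atTop (α := ℝ) (n := 2) two_ne_zero).comp Filter.tendsto_neg_atBot_atTop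
      refine this.congr fun y => ?_
      simp [Function.comp, neg_pow]
    have := (Filter.tendsto_neg_atTop_atBot.comp h).atBot_div_const (by norm_num : (0:ℝ) < 2)
    simpa [Function.comp, neg_div] using this
  have := integral_Iic_of_hasDerivAt_of_tendsto' hderiv hint htend
  simpa using this

lemma integrableOn_x_mul_stdNormalPDF (d : ℝ) :
    IntegrableOn (fun x : ℝ => x * stdNormalPDF x) (Set.Iic d) := by
  have h := integrable_mul_exp_neg_mul_sq (b := (2⁻¹ : ℝ)) (by norm_num)
  have heq : (fun x : ℝ => x * stdNormalPDF x)
      = fun x : ℝ => (Real.sqrt (2 * Real.pi))⁻¹ * (x * Real.exp (-2⁻¹ * x ^ 2)) := by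
    funext x
    rw [stdNormalPDF]
    rw [show (-2⁻¹ * x ^ 2 : ℝ) = -(x ^ 2) / 2 by ring]
    ring
  rw [heq]
  exact ((h.const_mul _).integrableOn)

lemma integral_x_mul_stdNormalPDF (d : ℝ) :
    ∫ x in Set.Iic d, x * stdNormalPDF x = -stdNormalPDF d := by
  have heq : (fun x : ℝ => x * stdNormalPDF x)
      = fun x : ℝ => (Real.sqrt (2 * Real.pi))⁻¹ * (x * Real.exp (-(x ^ 2) / 2)) := by
    funext x; rw [stdNormalPDF]; ring
  rw [heq, integral_const_mul, integral_x_mul_exp, stdNormalPDF]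
  ring

lemma mills (d : ℝ) : 0 < stdNormalCDF d * d + stdNormalPDF d := by
  rcases le_or_gt 0 d with hd | hd
  · have h1 := stdNormalCDF_pos d
    have h2 := stdNormalPDF_pos d
    nlinarith
  · have hφd := stdNormalPDF_pos d
    set g : ℝ → ℝ := fun x => (1 / d) * (x * stdNormalPDF x) - stdNormalPDF x with hg
    have hgint : IntegrableOn g (Set.Iic d) :=
      ((integrableOn_x_mul_stdNormalPDF d).const_mul _).sub
        integrable_stdNormalPDF.integrableOn
    have hgpos : 0 < ∫ x in Set.Iic d, g x := by
      rw [setIntegral_pos_iff_support_of_nonneg_ae]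
      · refine lt_of_lt_of_le ?_ (measure_mono (?_ : Set.Iio d ⊆ Function.support g ∩ Set.Iic d))
        · simp [Real.volume_Iio]
        · intro x hx
          have hx' : x < d := hx
          have h1 : (1 : ℝ) < x / d := by
            rw [lt_div_iff_of_neg hd]
            linarith
          have : 0 < g x := by
            have : g x = (x / d - 1) * stdNormalPDF x := by rw [hg]; field_simp
            rw [this]
            exact mul_pos (by linarith) (stdNormalPDF_pos x)
          exact ⟨this.ne', hx'.le⟩
      · rw [Filter.EventuallyLE, MeasureTheory.ae_restrict_iff' measurableSet_Iic]
        refine Filter.Eventually.of_forall fun x hx => ?_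
        have h1 : (1 : ℝ) ≤ x / d := by
          rw [le_div_iff_of_neg hd]
          simpa using hx.out
        have : g x = (x / d - 1) * stdNormalPDF x := by rw [hg]; field_simp
        rw [Pi.zero_apply, this]
        exact mul_nonneg (by linarith) (stdNormalPDF_pos x).le
      · exact hgint
    have hcalc : ∫ x in Set.Iic d, g x
        = (1 / d) * (-stdNormalPDF d) - stdNormalCDF d := by
      rw [hg, MeasureTheory.integral_sub
        ((integrableOn_x_mul_stdNormalPDF d).const_mul _)
        integrable_stdNormalPDF.integrableOn,
        integral_const_mul, integral_x_mul_stdNormalPDF, ← stdNormalCDF_eq]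
    rw [hcalc] at hgpos
    have h2 : stdNormalCDF d < (1 / d) * (-stdNormalPDF d) := by linarith
    have h3 : d * (1 / d) = 1 := by field_simp [hd.ne]
    nlinarith [mul_lt_mul_of_pos_right h2 (neg_pos.mpr hd), h3]

/-- The total amount invested in the risky asset by the optimal strategy under a lower
constraint `K_l` equals `(θ/(ασ))e^{-r(T-t)}(1 - Φ(d_l))`; in particular it is strictly
positive, strictly smaller than the unconstrained amount `(θ/(ασ))e^{-r(T-t)}`, and equals
half of it when `x = K_l e^{-r(T-t)}`. -/
theorem stmt_8 (r μ σ α T : ℝ) (hμ : r < μ) (hσ : 0 < σ) (hα : 0 < α) (hT : 0 < T)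
    (θ : ℝ) (hθ : θ = (μ - r) / σ)
    (Kl : ℝ) (t : ℝ) (ht0 : 0 ≤ t) (htT : t < T) (x : ℝ)
    (dl : ℝ) (hdl : dl = (Kl - x * Real.exp (r * (T - t))) * α / (θ * Real.sqrt (T - t)))
    (p : ℝ)
    (hp : p = stdNormalCDF dl * (Real.exp (-(r * (T - t))) * Kl - x)
        + θ * Real.sqrt (T - t) / α * Real.exp (-(r * (T - t))) * stdNormalPDF dl)
    (πp : ℝ)
    (hπp : πp = -stdNormalCDF dl
        / (σ * Real.sqrt (T - t) * (stdNormalCDF dl * dl + stdNormalPDF dl))) :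
    θ / (α * σ) * Real.exp (-(r * (T - t))) + πp * p
        = θ / (α * σ) * Real.exp (-(r * (T - t))) * (1 - stdNormalCDF dl)
    ∧ 0 < θ / (α * σ) * Real.exp (-(r * (T - t))) + πp * p
    ∧ θ / (α * σ) * Real.exp (-(r * (T - t))) + πp * p
        < θ / (α * σ) * Real.exp (-(r * (T - t)))
    ∧ (x = Kl * Real.exp (-(r * (T - t))) →
        θ / (α * σ) * Real.exp (-(r * (T - t))) + πp * p
          = 1 / 2 * (θ / (α * σ) * Real.exp (-(r * (T - t))))) := by
  have hτ : 0 < T - t := by linarith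
  have hs : 0 < Real.sqrt (T - t) := Real.sqrt_pos.mpr hτ
  have hθpos : 0 < θ := hθ ▸ div_pos (by linarith) hσ
  have hE : 0 < Real.exp (-(r * (T - t))) := Real.exp_pos _
  have hEE : Real.exp (-(r * (T - t))) * Real.exp (r * (T - t)) = 1 := by
    rw [← Real.exp_add]; simp
  have hD : 0 < stdNormalCDF dl * dl + stdNormalPDF dl := mills dl
  have hx : Kl - x * Real.exp (r * (T - t)) = dl * (θ * Real.sqrt (T - t)) / α := by
    rw [hdl]
    field_simp
  have hkey : p = θ * Real.sqrt (T - t) / α * Real.exp (-(r * (T - t)))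
      * (stdNormalCDF dl * dl + stdNormalPDF dl) := by
    rw [hp]
    have h1 : Real.exp (-(r * (T - t))) * Kl - x
        = Real.exp (-(r * (T - t))) * (Kl - x * Real.exp (r * (T - t))) := by
      linear_combination x * hEE
    rw [h1, hx]
    field_simp
  have heq : θ / (α * σ) * Real.exp (-(r * (T - t))) + πp * p
      = θ / (α * σ) * Real.exp (-(r * (T - t))) * (1 - stdNormalCDF dl) := by
    rw [hπp, hkey]
    field_simp
    ring
  have hΦpos := stdNormalCDF_pos dl
  have hΦlt := stdNormalCDF_lt_one dl
  have hbase : 0 < θ / (α * σ) * Real.exp (-(r * (T - t))) := by positivity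
  refine ⟨heq, ?_, ?_, ?_⟩
  · rw [heq]
    exact mul_pos hbase (by linarith)
  · rw [heq]
    nlinarith
  · intro hxval
    have hdl0 : dl = 0 := by
      rw [hdl, hxval, mul_assoc, hEE, mul_one]
      simp
    rw [heq, hdl0, stdNormalCDF_zero]
    ring
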